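/- Assume (A1) r has all coordinates strictly positive and (A2) M_{ij} ≤ 0 for all i ≠ j, where M = XᵀX and r = Xᵀy. For s > 0, let μ(s) be the unique minimizer over {θ ≥ 0} of f(θ) + (1/s)⟨k, θ⟩. Then for every s > 0, the time average (1/(s · log(1/ε))) ∫₀^{s · log(1/ε)} θ^{(ε)}(t) dt converges to μ(s) as ε → 0, and the convergence is uniform for s in compact subsets of (0,∞). -/

import Mathlib

open Matrix MeasureTheory intervalIntegral

lemma dln_L1 {n d : ℕ} (X : Matrix (Fin n) (Fin d) ℝ) (y : Fin n → ℝ) (u : Fin d → ℝ) :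
    ∑ i, (Xᵀ *ᵥ y) i * u i = ∑ j, y j * (X *ᵥ u) j := by
  simp only [Matrix.mulVec, dotProduct, Matrix.transpose_apply, Finset.sum_mul,
    Finset.mul_sum]
  rw [Finset.sum_comm]
  exact Finset.sum_congr rfl fun j _ => Finset.sum_congr rfl fun i _ => by ring

lemma dln_L2 {n d : ℕ} (X : Matrix (Fin n) (Fin d) ℝ) (u w : Fin d → ℝ) :
    ∑ i, u i * ((Xᵀ * X) *ᵥ w) i = ∑ j, (X *ᵥ u) j * (X *ᵥ w) j := by
  rw [← Matrix.mulVec_mulVec]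
  calc ∑ i, u i * (Xᵀ *ᵥ (X *ᵥ w)) i = ∑ i, (Xᵀ *ᵥ (X *ᵥ w)) i * u i := by
        exact Finset.sum_congr rfl fun i _ => by ring
    _ = ∑ j, (X *ᵥ w) j * (X *ᵥ u) j := dln_L1 X (X *ᵥ w) u
    _ = ∑ j, (X *ᵥ u) j * (X *ᵥ w) j := Finset.sum_congr rfl fun j _ => by ring

/-- Exact second-order expansion of the regularized objective. -/
lemma dln_expand {n d : ℕ} (X : Matrix (Fin n) (Fin d) ℝ) (y : Fin n → ℝ)
    (f : (Fin d → ℝ) → ℝ)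
    (hf : ∀ θ : Fin d → ℝ, f θ =
      (1 / 2) * ∑ j, (y j) ^ 2 - ∑ i, (Xᵀ *ᵥ y) i * θ i + (1 / 2) * ∑ i, θ i * ((Xᵀ * X) *ᵥ θ) i)
    (k : Fin d → ℝ) (c : ℝ) (u w : Fin d → ℝ) :
    f u + c * ∑ i, k i * u i - (f w + c * ∑ i, k i * w i)
      = ∑ i, (((Xᵀ * X) *ᵥ w) i - (Xᵀ *ᵥ y) i + c * k i) * (u i - w i)
        + (1/2) * ∑ j, ((X *ᵥ u) j - (X *ᵥ w) j)^2 := by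
  have hq : ∀ j, ((X *ᵥ u) j - (X *ᵥ w) j)^2
      = (X *ᵥ u) j * (X *ᵥ u) j - 2 * ((X *ᵥ w) j * (X *ᵥ u) j) + (X *ᵥ w) j * (X *ᵥ w) j := by
    intro j; ring
  have hlin : ∀ i, (((Xᵀ * X) *ᵥ w) i - (Xᵀ *ᵥ y) i + c * k i) * (u i - w i)
      = w i * ((Xᵀ * X) *ᵥ w) i * 0 +
        (((Xᵀ * X) *ᵥ w) i * u i - ((Xᵀ * X) *ᵥ w) i * w i
          - (Xᵀ *ᵥ y) i * u i + (Xᵀ *ᵥ y) i * w i + c * (k i * u i) - c * (k i * w i)) := by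
    intro i; ring
  simp only [hf, hq, hlin]
  simp only [Finset.sum_add_distrib, Finset.sum_sub_distrib, ← Finset.mul_sum]
  have e1 : ∑ i, ((Xᵀ * X) *ᵥ w) i * u i = ∑ j, (X *ᵥ u) j * (X *ᵥ w) j := by
    rw [← dln_L2 X u w]; exact Finset.sum_congr rfl fun i _ => by ring
  have e2 : ∑ i, ((Xᵀ * X) *ᵥ w) i * w i = ∑ i, w i * ((Xᵀ * X) *ᵥ w) i :=
    Finset.sum_congr rfl fun i _ => by ring
  have e3 : ∑ i, u i * ((Xᵀ * X) *ᵥ u) i = ∑ j, (X *ᵥ u) j * (X *ᵥ u) j := dln_L2 X u u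
  have e4 : ∑ i, w i * ((Xᵀ * X) *ᵥ w) i = ∑ j, (X *ᵥ w) j * (X *ᵥ w) j := dln_L2 X w w
  have e5 : ∑ j, (X *ᵥ w) j * (X *ᵥ u) j = ∑ j, (X *ᵥ u) j * (X *ᵥ w) j :=
    Finset.sum_congr rfl fun j _ => by ring
  rw [e1, e2, e3, e4]
  simp only [e5, ← pow_two]
  simp only [mul_zero, Finset.sum_const_zero]
  ring

section
variable {n d : ℕ}
lemma dln_fsq (X : Matrix (Fin n) (Fin d) ℝ) (y : Fin n → ℝ)
    (f : (Fin d → ℝ) → ℝ)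
    (hf : ∀ θ : Fin d → ℝ, f θ =
      (1 / 2) * ∑ j, (y j) ^ 2 - ∑ i, (Xᵀ *ᵥ y) i * θ i + (1 / 2) * ∑ i, θ i * ((Xᵀ * X) *ᵥ θ) i)
    (θ : Fin d → ℝ) :
    f θ = (1/2) * ∑ j, (y j - (X *ᵥ θ) j)^2 := by
  rw [hf θ]
  have hq : ∀ j, (y j - (X *ᵥ θ) j)^2
      = y j^2 - 2*(y j * (X *ᵥ θ) j) + (X *ᵥ θ) j * (X *ᵥ θ) j := by intro j; ring
  simp only [hq, Finset.sum_add_distrib, Finset.sum_sub_distrib]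
  have e1 : ∑ x, 2 * (y x * (X *ᵥ θ) x) = 2 * ∑ x, y x * (X *ᵥ θ) x :=
    (Finset.mul_sum _ _ _).symm
  rw [e1, ← dln_L1 X y θ, ← dln_L2 X θ θ]
  ring

/-- Coercivity on the nonnegative orthant: sublevel sets of `½‖y - Xv‖²` are bounded. -/
lemma dln_coercive (hd : 0 < d) (X : Matrix (Fin n) (Fin d) ℝ) (y : Fin n → ℝ)
    (hA1 : ∀ i, 0 < (Xᵀ *ᵥ y) i) (F₀ : ℝ) :
    ∃ B : ℝ, 1 ≤ B ∧ ∀ v : Fin d → ℝ, (∀ i, 0 ≤ v i) →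
      (1/2) * ∑ j, (y j - (X *ᵥ v) j)^2 ≤ F₀ → ∀ i, v i ≤ B := by
  set Δ : Set (Fin d → ℝ) := {v | (∀ i, 0 ≤ v i) ∧ ∑ i, v i = 1} with hΔ
  have hclosed : IsClosed Δ := by
    have h1 : IsClosed {v : Fin d → ℝ | ∀ i, 0 ≤ v i} := by
      have he : {v : Fin d → ℝ | ∀ i, 0 ≤ v i} = ⋂ i, {v | 0 ≤ v i} := by ext v; simp
      rw [he]
      exact isClosed_iInter fun i => isClosed_le continuous_const (continuous_apply i)
    have h2 : IsClosed {v : Fin d → ℝ | ∑ i, v i = 1} :=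
      isClosed_eq (continuous_finset_sum _ fun i _ => continuous_apply i) continuous_const
    exact h1.inter h2
  have hsub : Δ ⊆ Set.Icc 0 1 := by
    rintro v ⟨hv0, hv1⟩
    constructor
    · intro i; exact hv0 i
    · intro i
      calc v i ≤ ∑ j, v j := Finset.single_le_sum (fun j _ => hv0 j) (Finset.mem_univ i)
        _ = 1 := hv1
  have hcpt : IsCompact Δ := IsCompact.of_isClosed_subset isCompact_Icc hclosed hsub
  have hne : Δ.Nonempty := by
    refine ⟨fun _ => (d:ℝ)⁻¹, fun i => by positivity, ?_⟩
    have hd0 : (d:ℝ) ≠ 0 := Nat.cast_ne_zero.mpr hd.ne'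
    simp [Finset.sum_const, Finset.card_univ, nsmul_eq_mul]
    field_simp
  have hφcont : Continuous (fun v : Fin d → ℝ => ∑ j, ((X *ᵥ v) j)^2) := by
    apply continuous_finset_sum
    intro j _
    have : Continuous (fun v : Fin d → ℝ => (X *ᵥ v) j) := by
      simp only [Matrix.mulVec, dotProduct]
      exact continuous_finset_sum _ fun i _ => continuous_const.mul (continuous_apply i)
    exact this.pow 2
  obtain ⟨vs, hvsΔ, hmin⟩ := hcpt.exists_isMinOn hne hφcont.continuousOn
  set m := ∑ j, ((X *ᵥ vs) j)^2 with hmdef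
  have hm0 : 0 ≤ m := Finset.sum_nonneg fun j _ => sq_nonneg _
  have hmpos : 0 < m := by
    rcases hm0.lt_or_eq with h | h
    · exact h
    · exfalso
      have hXvs : ∀ j, (X *ᵥ vs) j = 0 := by
        intro j
        have h0 := (Finset.sum_eq_zero_iff_of_nonneg (fun j _ => sq_nonneg _)).1 h.symm j
          (Finset.mem_univ j)
        exact sq_eq_zero_iff.1 h0
      have hrv : ∑ i, (Xᵀ *ᵥ y) i * vs i = 0 := by
        rw [dln_L1 X y vs]
        exact Finset.sum_eq_zero fun j _ => by rw [hXvs j, mul_zero]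
      obtain ⟨hvs0, hvs1⟩ := hvsΔ
      obtain ⟨i₀, hi₀⟩ : ∃ i, 0 < vs i := by
        by_contra hcon
        push_neg at hcon
        have : ∑ i, vs i = 0 := Finset.sum_eq_zero fun i _ => le_antisymm (hcon i) (hvs0 i)
        rw [hvs1] at this; norm_num at this
      have hpos : 0 < ∑ i, (Xᵀ *ᵥ y) i * vs i := by
        apply Finset.sum_pos'
        · intro i _; exact mul_nonneg (hA1 i).le (hvs0 i)
        · exact ⟨i₀, Finset.mem_univ i₀, mul_pos (hA1 i₀) hi₀⟩
      rw [hrv] at hpos; exact lt_irrefl 0 hpos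
  set R := 4*F₀ + 2*∑ j, (y j)^2 with hRdef
  refine ⟨max 1 (Real.sqrt (R/m)), le_max_left _ _, ?_⟩
  intro v hv hfv i
  have hXv : ∑ j, ((X *ᵥ v) j)^2 ≤ R := by
    have hpt : ∀ j ∈ Finset.univ, ((X *ᵥ v) j)^2 ≤ 2*(y j - (X *ᵥ v) j)^2 + 2*(y j)^2 :=
      fun j _ => by nlinarith [sq_nonneg (2*y j - (X *ᵥ v) j)]
    calc ∑ j, ((X *ᵥ v) j)^2 ≤ ∑ j, (2*(y j - (X *ᵥ v) j)^2 + 2*(y j)^2) :=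
          Finset.sum_le_sum hpt
      _ = 2*∑ j, (y j - (X *ᵥ v) j)^2 + 2*∑ j, (y j)^2 := by
          rw [Finset.sum_add_distrib, ← Finset.mul_sum, ← Finset.mul_sum]
      _ ≤ R := by rw [hRdef]; linarith
  set σ := ∑ i, v i with hσdef
  have hσ0 : 0 ≤ σ := Finset.sum_nonneg fun i _ => hv i
  rcases hσ0.lt_or_eq with hσpos | hσzero
  · -- normalize
    have hwΔ : (fun i => v i / σ) ∈ Δ := by
      constructor
      · intro i; exact div_nonneg (hv i) hσ0
      · rw [← Finset.sum_div, ← hσdef, div_self hσpos.ne']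
    have hXw : ∀ j, (X *ᵥ fun i => v i / σ) j = (X *ᵥ v) j / σ := by
      intro j
      simp only [Matrix.mulVec, dotProduct, Finset.sum_div]
      exact Finset.sum_congr rfl fun i _ => by ring
    have hmw : m ≤ ∑ j, ((X *ᵥ fun i => v i / σ) j)^2 := hmin hwΔ
    have hmw' : m ≤ (∑ j, ((X *ᵥ v) j)^2) / σ^2 := by
      have he : ∑ j, ((X *ᵥ fun i => v i / σ) j)^2 = (∑ j, ((X *ᵥ v) j)^2) / σ^2 := by
        rw [Finset.sum_div]
        exact Finset.sum_congr rfl fun j _ => by rw [hXw j, div_pow]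
      rwa [he] at hmw
    have hσ2 : σ^2 ≤ R/m := by
      rw [le_div_iff₀ hmpos]
      have h1 : m * σ^2 ≤ ∑ j, ((X *ᵥ v) j)^2 := by
        rw [← le_div_iff₀ (by positivity : (0:ℝ) < σ^2)] at *
        exact hmw'
      calc σ^2 * m = m * σ^2 := by ring
        _ ≤ ∑ j, ((X *ᵥ v) j)^2 := h1
        _ ≤ R := hXv
    have hσle : σ ≤ Real.sqrt (R/m) := by
      rw [show σ = Real.sqrt (σ^2) from (Real.sqrt_sq hσ0).symm]
      exact Real.sqrt_le_sqrt hσ2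
    calc v i ≤ σ := Finset.single_le_sum (fun j _ => hv j) (Finset.mem_univ i)
      _ ≤ Real.sqrt (R/m) := hσle
      _ ≤ max 1 (Real.sqrt (R/m)) := le_max_right _ _
  · -- all zero
    have : v i = 0 := by
      have := (Finset.sum_eq_zero_iff_of_nonneg (fun i _ => hv i)).1 hσzero.symm i (Finset.mem_univ i)
      exact this
    rw [this]
    exact le_trans zero_le_one (le_max_left _ _)

/-- Uniqueness of the nonnegatively-constrained minimizer under (A1),(A2). -/
lemma dln_unique (X : Matrix (Fin n) (Fin d) ℝ) (y : Fin n → ℝ)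
    (hA1 : ∀ i, 0 < (Xᵀ *ᵥ y) i)
    (hA2 : ∀ i j, i ≠ j → (Xᵀ * X) i j ≤ 0)
    (f : (Fin d → ℝ) → ℝ)
    (hf : ∀ θ : Fin d → ℝ, f θ =
      (1 / 2) * ∑ j, (y j) ^ 2 - ∑ i, (Xᵀ *ᵥ y) i * θ i + (1 / 2) * ∑ i, θ i * ((Xᵀ * X) *ᵥ θ) i)
    (k : Fin d → ℝ) (c : ℝ) (a b : Fin d → ℝ)
    (ha : ∀ i, 0 ≤ a i) (hb : ∀ i, 0 ≤ b i)
    (hmina : ∀ v : Fin d → ℝ, (∀ i, 0 ≤ v i) →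
      f a + c * ∑ i, k i * a i ≤ f v + c * ∑ i, k i * v i)
    (hminb : ∀ v : Fin d → ℝ, (∀ i, 0 ≤ v i) →
      f b + c * ∑ i, k i * b i ≤ f v + c * ∑ i, k i * v i) :
    a = b := by
  set M := Xᵀ * X with hM
  set r := Xᵀ *ᵥ y with hr
  set D := ∑ i, ((M *ᵥ a) i - r i + c * k i) * (b i - a i) with hD
  set Q := ∑ j, ((X *ᵥ b) j - (X *ᵥ a) j)^2 with hQ
  have hQ0 : 0 ≤ Q := Finset.sum_nonneg fun j _ => sq_nonneg _
  -- equal minimal values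
  have hFab : f b + c * ∑ i, k i * b i = f a + c * ∑ i, k i * a i :=
    le_antisymm (hminb a ha) (hmina b hb)
  have hDQ : D + (1/2) * Q = 0 := by
    have := dln_expand X y f hf k c b a
    rw [hFab] at this; rw [hD, hQ]; linarith
  -- midpoint
  have hmid : (0:ℝ) ≤ (1/2) * D + (1/8) * Q := by
    have hmge := hmina (fun i => (a i + b i)/2) (fun i => by have := ha i; have := hb i; positivity)
    have hexp := dln_expand X y f hf k c (fun i => (a i + b i)/2) a
    have e1 : ∑ i, ((M *ᵥ a) i - r i + c * k i) * ((fun i => (a i + b i)/2) i - a i)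
        = (1/2) * D := by
      rw [hD, Finset.mul_sum]
      exact Finset.sum_congr rfl fun i _ => by ring
    have e2 : ∑ j, ((X *ᵥ fun i => (a i + b i)/2) j - (X *ᵥ a) j)^2 = (1/4) * Q := by
      rw [hQ, Finset.mul_sum]
      refine Finset.sum_congr rfl fun j _ => ?_
      have : (X *ᵥ fun i => (a i + b i)/2) j = ((X *ᵥ a) j + (X *ᵥ b) j)/2 := by
        simp [Matrix.mulVec, dotProduct, Finset.sum_div, ← Finset.sum_add_distrib]
        exact Finset.sum_congr rfl fun i _ => by ring
      rw [this]; ring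
    rw [e1, e2] at hexp
    linarith
  have hQzero : Q = 0 := by linarith
  -- hence X(b-a) = 0
  have hXeq : ∀ j, (X *ᵥ b) j = (X *ᵥ a) j := by
    intro j
    have h := (Finset.sum_eq_zero_iff_of_nonneg (fun j _ => sq_nonneg _)).1 hQzero j (Finset.mem_univ j)
    have := sq_eq_zero_iff.1 h
    linarith
  -- positive and negative parts
  set p : Fin d → ℝ := fun i => max (b i - a i) 0 with hp
  set m : Fin d → ℝ := fun i => max (a i - b i) 0 with hm
  have hpnn : ∀ i, 0 ≤ p i := fun i => le_max_right _ _
  have hmnn : ∀ i, 0 ≤ m i := fun i => le_max_right _ _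
  have hpdef : ∀ i, p i = max (b i - a i) 0 := fun i => rfl
  have hmdef : ∀ i, m i = max (a i - b i) 0 := fun i => rfl
  have hpm : ∀ i, p i - m i = b i - a i := fun i => by
    rw [hpdef, hmdef]; rcases le_total (a i) (b i) with h | h
    · rw [max_eq_left (by linarith), max_eq_right (by linarith)]; ring
    · rw [max_eq_right (by linarith), max_eq_left (by linarith)]; ring
  have hpm0 : ∀ i, p i * m i = 0 := fun i => by
    rw [hpdef, hmdef]; rcases le_total (a i) (b i) with h | h
    · rw [max_eq_right (by linarith : a i - b i ≤ 0)]; ring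
    · rw [max_eq_right (by linarith : b i - a i ≤ 0)]; ring
  have hXpm : ∀ j, (X *ᵥ p) j = (X *ᵥ m) j := by
    intro j
    have : (X *ᵥ p) j - (X *ᵥ m) j = (X *ᵥ b) j - (X *ᵥ a) j := by
      simp only [Matrix.mulVec, dotProduct, ← Finset.sum_sub_distrib]
      refine Finset.sum_congr rfl fun i _ => ?_
      calc X j i * p i - X j i * m i = X j i * (p i - m i) := by ring
        _ = X j i * (b i - a i) := by rw [hpm i]
        _ = X j i * b i - X j i * a i := by ring
    have := hXeq j; linarith
  -- quadratic form of p vanishes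
  have hEp : ∑ j, ((X *ᵥ p) j)^2 ≤ 0 := by
    have e : ∑ j, ((X *ᵥ p) j)^2 = ∑ i, p i * (M *ᵥ m) i := by
      rw [hM, dln_L2 X p m]
      exact Finset.sum_congr rfl fun j _ => by rw [hXpm j]; ring
    rw [e]
    have : ∀ i ∈ Finset.univ, p i * (M *ᵥ m) i ≤ 0 := by
      intro i _
      have : (M *ᵥ m) i = ∑ j, M i j * m j := by simp [Matrix.mulVec, dotProduct]
      rw [this, Finset.mul_sum]
      apply Finset.sum_nonpos
      intro j _
      rcases eq_or_ne i j with h | h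
      · subst h
        have e : p i * (M i i * m i) = M i i * (p i * m i) := by ring
        rw [e, hpm0 i, mul_zero]
      · have hMij := hA2 i j h
        have h1 : 0 ≤ p i * m j := mul_nonneg (hpnn i) (hmnn j)
        have e : p i * (M i j * m j) = M i j * (p i * m j) := by ring
        rw [e]
        exact mul_nonpos_iff.mpr (Or.inr ⟨hMij, h1⟩)
    exact Finset.sum_nonpos this
  have hXp0 : ∀ j, (X *ᵥ p) j = 0 := by
    intro j
    have h0 : ∑ j, ((X *ᵥ p) j)^2 = 0 :=
      le_antisymm hEp (Finset.sum_nonneg fun j _ => sq_nonneg _)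
    have h := (Finset.sum_eq_zero_iff_of_nonneg (fun j _ => sq_nonneg _)).1 h0 j (Finset.mem_univ j)
    exact sq_eq_zero_iff.1 h
  have hrp : ∑ i, r i * p i = 0 := by
    rw [hr, dln_L1 X y p]
    apply Finset.sum_eq_zero
    intro j _; rw [hXp0 j, mul_zero]
  have hpzero : ∀ i, p i = 0 := by
    intro i
    have h := (Finset.sum_eq_zero_iff_of_nonneg
      (fun i _ => mul_nonneg (hA1 i).le (hpnn i))).1 hrp i (Finset.mem_univ i)
    have := hA1 i
    rcases mul_eq_zero.1 h with h | h
    · exact absurd h (ne_of_gt this)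
    · exact h
  have hmzero : ∀ i, m i = 0 := by
    intro i
    have hXm0 : ∀ j, (X *ᵥ m) j = 0 := fun j => by rw [← hXpm j, hXp0 j]
    have hrm : ∑ i, r i * m i = 0 := by
      rw [hr, dln_L1 X y m]
      exact Finset.sum_eq_zero fun j _ => by rw [hXm0 j, mul_zero]
    have h := (Finset.sum_eq_zero_iff_of_nonneg
      (fun i _ => mul_nonneg (hA1 i).le (hmnn i))).1 hrm i (Finset.mem_univ i)
    rcases mul_eq_zero.1 h with h | h
    · exact absurd h (ne_of_gt (hA1 i))
    · exact h
  funext i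
  have h1 := hpm i
  rw [hpzero i, hmzero i] at h1
  linarith

end

lemma dln_primitive (φ : ℝ → ℝ) (hφ : Continuous φ) (t : ℝ) :
    HasDerivAt (fun x => ∫ τ in (0:ℝ)..x, φ τ) (φ t) t :=
  intervalIntegral.integral_hasDerivAt_right (hφ.intervalIntegrable _ _)
    (hφ.stronglyMeasurableAtFilter _ _) hφ.continuousAt

section
variable {n d : ℕ}

lemma dln_L1' (X : Matrix (Fin n) (Fin d) ℝ) (y : Fin n → ℝ) (u : Fin d → ℝ) :
    ∑ i, (Xᵀ *ᵥ y) i * u i = ∑ j, y j * (X *ᵥ u) j := by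
  simp only [Matrix.mulVec, dotProduct, Matrix.transpose_apply, Finset.sum_mul,
    Finset.mul_sum]
  rw [Finset.sum_comm]
  exact Finset.sum_congr rfl fun j _ => Finset.sum_congr rfl fun i _ => by ring

lemma dln_L3 (X : Matrix (Fin n) (Fin d) ℝ) (y : Fin n → ℝ) (v w : Fin d → ℝ) :
    ∑ j, (y j - (X *ᵥ v) j) * (X *ᵥ w) j
      = ∑ i, ((Xᵀ *ᵥ y) i - ((Xᵀ * X) *ᵥ v) i) * w i := by
  have h1 : ∑ i, (Xᵀ *ᵥ (y - X *ᵥ v)) i * w i = ∑ j, (y - X *ᵥ v) j * (X *ᵥ w) j :=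
    dln_L1' X (y - X *ᵥ v) w
  have h2 : Xᵀ *ᵥ (y - X *ᵥ v) = fun i => (Xᵀ *ᵥ y) i - ((Xᵀ * X) *ᵥ v) i := by
    rw [Matrix.mulVec_sub, Matrix.mulVec_mulVec]
    rfl
  rw [h2] at h1
  calc ∑ j, (y j - (X *ᵥ v) j) * (X *ᵥ w) j
      = ∑ j, (y - X *ᵥ v) j * (X *ᵥ w) j :=
        Finset.sum_congr rfl fun j _ => by rw [Pi.sub_apply]
    _ = ∑ i, (fun i => (Xᵀ *ᵥ y) i - ((Xᵀ * X) *ᵥ v) i) i * w i := h1.symm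
    _ = ∑ i, ((Xᵀ *ᵥ y) i - ((Xᵀ * X) *ᵥ v) i) * w i := Finset.sum_congr rfl fun i _ => rfl

lemma dln_core (X : Matrix (Fin n) (Fin d) ℝ) (y : Fin n → ℝ)
    (hA2 : ∀ i j, i ≠ j → (Xᵀ * X) i j ≤ 0)
    (u : ℝ → Fin d → ℝ)
    (hode : ∀ t ≥ (0:ℝ), ∀ i,
      HasDerivAt (fun τ => u τ i) (u t i * ((Xᵀ *ᵥ y) i - ((Xᵀ * X) *ᵥ u t) i)) t)
    (hpos0 : ∀ i, 0 < u 0 i)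
    (hsmall : ∀ i, ∑ j, |(Xᵀ * X) i j| * u 0 j < (Xᵀ *ᵥ y) i)
    (B F₀ : ℝ)
    (hcoB : ∀ v : Fin d → ℝ, (∀ i, 0 ≤ v i) →
      (1/2) * ∑ j, (y j - (X *ᵥ v) j)^2 ≤ F₀ → ∀ i, v i ≤ B)
    (hF₀ : (1/2) * ∑ j, (y j - (X *ᵥ u 0) j)^2 ≤ F₀)
    (T : ℝ) (hT : 0 < T) :
    (∀ i, 0 < u T i ∧ u T i ≤ B) ∧
    (∀ i, 0 ≤ (∫ t in (0:ℝ)..T, u t i) / T ∧ (∫ t in (0:ℝ)..T, u t i) / T ≤ u T i) ∧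
    (∀ i, ((Xᵀ * X) *ᵥ (fun i' => (∫ t in (0:ℝ)..T, u t i') / T)) i - (Xᵀ *ᵥ y) i
        = (Real.log (u 0 i) - Real.log (u T i)) / T) := by
  set M : Matrix (Fin d) (Fin d) ℝ := Xᵀ * X with hM
  set r : Fin d → ℝ := Xᵀ *ᵥ y with hr
  -- continuity of the solution on [0,∞)
  have hcont : ∀ i, ContinuousOn (fun t => u t i) (Set.Ici 0) := fun i t ht =>
    ((hode t ht i).continuousAt).continuousWithinAt
  -- continuous extension
  set U : ℝ → Fin d → ℝ := fun t => u (max t 0) with hU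
  have hUeq : ∀ t ≥ (0:ℝ), U t = u t := fun t ht => by
    rw [hU]; simp [max_eq_left ht]
  have hUcont : ∀ i, Continuous (fun t => U t i) := by
    intro i
    exact (hcont i).comp_continuous (continuous_id.max continuous_const)
      (fun t => le_max_right t 0)
  have hMUcont : ∀ i, Continuous (fun t => (M *ᵥ U t) i) := by
    intro i
    simp only [Matrix.mulVec, dotProduct]
    exact continuous_finset_sum _ fun j _ => continuous_const.mul (hUcont j)
  -- velocity field, extended continuously
  set W : ℝ → Fin d → ℝ := fun t i => U t i * (r i - (M *ᵥ U t) i) with hW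
  have hWcont : ∀ i, Continuous (fun t => W t i) := fun i =>
    (hUcont i).mul (continuous_const.sub (hMUcont i))
  have hWode : ∀ t ≥ (0:ℝ), ∀ i, HasDerivAt (fun τ => u τ i) (W t i) t := by
    intro t ht i
    have e : W t i = u t i * (r i - (M *ᵥ u t) i) := by
      show U t i * (r i - (M *ᵥ U t) i) = _
      rw [hUeq t ht]
    rw [e]
    exact hode t ht i
  -- positivity
  have hupos : ∀ i, ∀ t ≥ (0:ℝ), 0 < u t i := by
    intro i
    set g : ℝ → ℝ := fun t => r i - (M *ᵥ U t) i with hgdef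
    have hgcont : Continuous g := continuous_const.sub (hMUcont i)
    set G : ℝ → ℝ := fun x => ∫ τ in (0:ℝ)..x, g τ with hGdef
    have hGd : ∀ t, HasDerivAt G (g t) t := dln_primitive g hgcont
    have hF : ∀ t ≥ (0:ℝ), HasDerivAt (fun τ => u τ i * Real.exp (-G τ)) 0 t := by
      intro t ht
      have h2 : HasDerivAt (fun τ => Real.exp (-G τ)) (Real.exp (-G t) * -g t) t := by
        simpa using ((hGd t).neg).exp
      have h3 := (hWode t ht i).mul h2
      have e0 : W t i * Real.exp (-G t) + u t i * (Real.exp (-G t) * -g t) = 0 := by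
        have eW : W t i = u t i * g t := by
          show U t i * (r i - (M *ᵥ U t) i) = u t i * (r i - (M *ᵥ U t) i)
          rw [hUeq t ht]
        rw [eW]; ring
      rw [← e0]
      exact h3
    intro t ht
    have hkey : u t i * Real.exp (-G t) = u 0 i * Real.exp (-G 0) := by
      have hd : ∀ x ∈ Set.uIcc (0:ℝ) t, HasDerivAt (fun τ => u τ i * Real.exp (-G τ))
          ((fun _ => (0:ℝ)) x) x := by
        intro x hx
        rw [Set.uIcc_of_le ht] at hx
        exact hF x hx.1
      have := intervalIntegral.integral_eq_sub_of_hasDerivAt hd intervalIntegrable_const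
      simp only [intervalIntegral.integral_zero] at this
      linarith
    have hG0 : G 0 = 0 := intervalIntegral.integral_same
    rw [hG0] at hkey
    simp only [neg_zero, Real.exp_zero, mul_one] at hkey
    have he := Real.exp_pos (-G t)
    nlinarith [hpos0 i]
  -- energy decay and boundedness
  have hbound : ∀ t ≥ (0:ℝ), ∀ i, u t i ≤ B := by
    have hXW : ∀ t ≥ (0:ℝ), ∀ j, HasDerivAt (fun τ => ∑ i, X j i * u τ i)
        (∑ i, X j i * W t i) t := fun t ht j =>
      HasDerivAt.fun_sum fun i _ => (hWode t ht i).const_mul (X j i)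
    set dV : ℝ → ℝ := fun t => -∑ i, W t i * (r i - (M *ᵥ U t) i) with hdVdef
    have hdVcont : Continuous dV :=
      (continuous_finset_sum _ fun i _ => (hWcont i).mul
        (continuous_const.sub (hMUcont i))).neg
    have hdVnonpos : ∀ t ≥ (0:ℝ), dV t ≤ 0 := by
      intro t ht
      have : ∀ i ∈ Finset.univ, (0:ℝ) ≤ W t i * (r i - (M *ᵥ U t) i) := by
        intro i _
        have e : W t i * (r i - (M *ᵥ U t) i) = U t i * (r i - (M *ᵥ U t) i)^2 := by
          show (U t i * (r i - (M *ᵥ U t) i)) * _ = _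
          ring
        rw [e]
        apply mul_nonneg _ (sq_nonneg _)
        rw [hUeq t ht]
        exact (hupos i t ht).le
      have h := Finset.sum_nonneg this
      simp only [hdVdef]
      linarith
    set V : ℝ → ℝ := fun τ => (1/2) * ∑ j, (y j - ∑ i, X j i * u τ i)^2 with hVdef
    have hVd : ∀ t ≥ (0:ℝ), HasDerivAt V (dV t) t := by
      intro t ht
      have hsq : ∀ j ∈ Finset.univ, HasDerivAt (fun τ => (y j - ∑ i, X j i * u τ i)^2)
          ((2:ℕ) * (y j - ∑ i, X j i * u t i)^(2-1) * (0 - ∑ i, X j i * W t i)) t :=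
        fun j _ => ((hasDerivAt_const t (y j)).sub (hXW t ht j)).pow 2
      have hV0 := (HasDerivAt.fun_sum hsq).const_mul (1/2 : ℝ)
      have heval : (1/2 : ℝ) * ∑ j, ((2:ℕ) * (y j - ∑ i, X j i * u t i)^(2-1)
          * (0 - ∑ i, X j i * W t i)) = dV t := by
        have e1 : ∀ j, ((2:ℕ):ℝ) * (y j - ∑ i, X j i * u t i)^(2-1)
            * (0 - ∑ i, X j i * W t i)
            = -(2 * ((y j - (X *ᵥ u t) j) * (X *ᵥ W t) j)) := by
          intro j
          have ea : (X *ᵥ u t) j = ∑ i, X j i * u t i := rfl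
          have eb : (X *ᵥ W t) j = ∑ i, X j i * W t i := rfl
          rw [ea, eb]
          push_cast
          ring
        simp only [e1]
        rw [Finset.sum_neg_distrib, ← Finset.mul_sum]
        rw [dln_L3 X y (u t) (W t)]
        rw [hdVdef]
        have e2 : ∀ i, ((Xᵀ *ᵥ y) i - ((Xᵀ * X) *ᵥ u t) i) * W t i
            = W t i * (r i - (M *ᵥ U t) i) := by
          intro i
          rw [hUeq t ht]
          show (r i - (M *ᵥ u t) i) * W t i = W t i * (r i - (M *ᵥ u t) i)
          ring
        rw [Finset.sum_congr rfl fun i _ => e2 i]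
        ring
      rw [← heval]
      exact hV0
    have hVle : ∀ t ≥ (0:ℝ), V t ≤ V 0 := by
      intro t ht
      have hd : ∀ x ∈ Set.uIcc (0:ℝ) t, HasDerivAt V (dV x) x := by
        intro x hx
        rw [Set.uIcc_of_le ht] at hx
        exact hVd x hx.1
      have hdVint : IntervalIntegrable dV MeasureTheory.volume 0 t :=
        hdVcont.intervalIntegrable 0 t
      have hftc := intervalIntegral.integral_eq_sub_of_hasDerivAt hd hdVint
      have hint : ∫ τ in (0:ℝ)..t, dV τ ≤ 0 := by
        have h0 : 0 ≤ ∫ τ in (0:ℝ)..t, -dV τ :=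
          intervalIntegral.integral_nonneg ht (fun x hx => by linarith [hdVnonpos x hx.1])
        rw [intervalIntegral.integral_neg] at h0
        linarith
      linarith
    intro t ht
    have hVF : (1/2) * ∑ j, (y j - (X *ᵥ u t) j)^2 ≤ F₀ := by
      have e : ∀ τ, V τ = (1/2) * ∑ j, (y j - (X *ᵥ u τ) j)^2 := fun τ => rfl
      calc (1/2) * ∑ j, (y j - (X *ᵥ u t) j)^2 = V t := (e t).symm
        _ ≤ V 0 := hVle t ht
        _ = (1/2) * ∑ j, (y j - (X *ᵥ u 0) j)^2 := e 0
        _ ≤ F₀ := hF₀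
    exact hcoB (u t) (fun i => (hupos i t ht).le) hVF
  -- velocity nonnegativity (monotone dynamics)
  have hvnn : ∀ t, 0 ≤ t → ∀ i, 0 ≤ W t i := by
    by_contra hcon
    push_neg at hcon
    obtain ⟨t₁, ht₁, i₁, hti₁⟩ := hcon
    set S : Set ℝ := Set.Icc 0 t₁ ∩ ⋃ i : Fin d, {t | W t i ≤ 0} with hSdef
    have hSclosed : IsClosed S := isClosed_Icc.inter
      (isClosed_iUnion_of_finite fun i => isClosed_le (hWcont i) continuous_const)
    have hSne : S.Nonempty := ⟨t₁, ⟨ht₁, le_rfl⟩, Set.mem_iUnion.2 ⟨i₁, hti₁.le⟩⟩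
    have hSbdd : BddBelow S := ⟨0, fun x hx => hx.1.1⟩
    set t₀ := sInf S with ht₀def
    have ht₀S : t₀ ∈ S := hSclosed.csInf_mem hSne hSbdd
    obtain ⟨⟨ht₀0, ht₀1⟩, ht₀bad⟩ := ht₀S
    obtain ⟨i₀, hi₀⟩ : ∃ i, W t₀ i ≤ 0 := by simpa using ht₀bad
    have hv0pos : ∀ i, 0 < W 0 i := by
      intro i
      have hU0 : U 0 = u 0 := hUeq 0 le_rfl
      have h1 : (M *ᵥ u 0) i ≤ ∑ j, |M i j| * u 0 j := by
        have h : ∀ j ∈ Finset.univ, M i j * u 0 j ≤ |M i j| * u 0 j := fun j _ =>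
          mul_le_mul_of_nonneg_right (le_abs_self _) (hpos0 j).le
        exact Finset.sum_le_sum h
      have h2 : (M *ᵥ u 0) i < r i := lt_of_le_of_lt h1 (hsmall i)
      show 0 < U 0 i * (r i - (M *ᵥ U 0) i)
      rw [hU0]
      exact mul_pos (hpos0 i) (by linarith)
    have ht₀pos : 0 < t₀ := by
      rcases ht₀0.lt_or_eq with h | h
      · exact h
      · exfalso; rw [← h] at hi₀; exact absurd hi₀ (not_le.2 (hv0pos i₀))
    have hpre : ∀ t, 0 ≤ t → t < t₀ → ∀ j, 0 < W t j := by
      intro t h0 hlt j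
      by_contra hc
      push_neg at hc
      have hmem : t ∈ S := ⟨⟨h0, le_trans hlt.le ht₀1⟩, Set.mem_iUnion.2 ⟨j, hc⟩⟩
      exact absurd (csInf_le hSbdd hmem) (not_le.2 hlt)
    have hWnn : ∀ t ∈ Set.Icc (0:ℝ) t₀, ∀ j, 0 ≤ W t j := by
      rintro t ⟨h0, h1⟩ j
      rcases h1.lt_or_eq with h | h
      · exact (hpre t h0 h j).le
      · have htpos : 0 < t := h ▸ ht₀pos
        have hnebot : (nhdsWithin t (Set.Ico 0 t)).NeBot := by
          apply mem_closure_iff_nhdsWithin_neBot.1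
          rw [closure_Ico (ne_of_lt htpos)]
          exact ⟨h0, le_rfl⟩
        have htend : Filter.Tendsto (fun τ => W τ j) (nhdsWithin t (Set.Ico 0 t))
            (nhds (W t j)) := ((hWcont j).continuousAt).continuousWithinAt
        refine ge_of_tendsto htend ?_
        filter_upwards [self_mem_nhdsWithin] with x hx
        exact (hpre x hx.1 (lt_of_lt_of_le hx.2 h.le) j).le
    -- Gronwall on [0, t₀] for coordinate i₀
    set a : ℝ → ℝ := fun t => (r i₀ - (M *ᵥ U t) i₀) - U t i₀ * M i₀ i₀ with hadef
    have hacont : Continuous a :=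
      (continuous_const.sub (hMUcont i₀)).sub ((hUcont i₀).mul continuous_const)
    set A : ℝ → ℝ := fun x => ∫ τ in (0:ℝ)..x, a τ with hAdef
    have hAd : ∀ t, HasDerivAt A (a t) t := dln_primitive a hacont
    have hAcont : Continuous A := continuous_iff_continuousAt.2 fun x => (hAd x).continuousAt
    set wt : ℝ → ℝ := fun t => -(U t i₀ * ∑ j ∈ Finset.univ.erase i₀, M i₀ j * W t j) with hwtdef
    have hwtcont : Continuous wt := ((hUcont i₀).mul
      (continuous_finset_sum _ fun j _ => continuous_const.mul (hWcont j))).neg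
    set vel : ℝ → ℝ := fun τ => u τ i₀ * (r i₀ - ∑ j, M i₀ j * u τ j) with hveldef
    have hveleq : ∀ t, 0 ≤ t → vel t = W t i₀ := by
      intro t ht
      show u t i₀ * (r i₀ - ∑ j, M i₀ j * u t j) = U t i₀ * (r i₀ - (M *ᵥ U t) i₀)
      rw [hUeq t ht]
      rfl
    have hveld : ∀ t, 0 ≤ t → HasDerivAt vel
        (W t i₀ * (r i₀ - ∑ j, M i₀ j * u t j) + u t i₀ * (0 - ∑ j, M i₀ j * W t j)) t := by
      intro t ht
      exact (hWode t ht i₀).mul ((hasDerivAt_const t (r i₀)).sub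
        (HasDerivAt.fun_sum fun j _ => (hWode t ht j).const_mul (M i₀ j)))
    have hψd : ∀ t ∈ Set.Icc (0:ℝ) t₀, HasDerivAt (fun τ => vel τ * Real.exp (-A τ))
        (Real.exp (-A t) * wt t) t := by
      rintro t ⟨ht, _⟩
      have hexp : HasDerivAt (fun τ => Real.exp (-A τ)) (Real.exp (-A t) * -a t) t := by
        simpa using ((hAd t).neg).exp
      have h3 := (hveld t ht).mul hexp
      have hsum : ∑ j, M i₀ j * W t j
          = M i₀ i₀ * W t i₀ + ∑ j ∈ Finset.univ.erase i₀, M i₀ j * W t j := by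
        rw [← Finset.add_sum_erase _ _ (Finset.mem_univ i₀)]
      have hUu : U t i₀ = u t i₀ := by rw [hUeq t ht]
      have hMUu : (M *ᵥ U t) i₀ = ∑ j, M i₀ j * u t j := by rw [hUeq t ht]; rfl
      have hWt : W t i₀ = u t i₀ * (r i₀ - ∑ j, M i₀ j * u t j) := by
        show U t i₀ * (r i₀ - (M *ᵥ U t) i₀) = _
        rw [hUu, hMUu]
      have E : (W t i₀ * (r i₀ - ∑ j, M i₀ j * u t j)
            + u t i₀ * (0 - ∑ j, M i₀ j * W t j)) * Real.exp (-A t)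
            + vel t * (Real.exp (-A t) * -a t)
          = Real.exp (-A t) * wt t := by
        show (W t i₀ * (r i₀ - ∑ j, M i₀ j * u t j)
            + u t i₀ * (0 - ∑ j, M i₀ j * W t j)) * Real.exp (-A t)
            + (u t i₀ * (r i₀ - ∑ j, M i₀ j * u t j))
              * (Real.exp (-A t) * -((r i₀ - (M *ᵥ U t) i₀) - U t i₀ * M i₀ i₀))
          = Real.exp (-A t) * -(U t i₀ * ∑ j ∈ Finset.univ.erase i₀, M i₀ j * W t j)
        rw [hMUu, hUu, hsum, hWt]
        ring
      rw [← E]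
      exact h3
    have hψftc : ∫ τ in (0:ℝ)..t₀, Real.exp (-A τ) * wt τ
        = vel t₀ * Real.exp (-A t₀) - vel 0 * Real.exp (-A 0) := by
      exact intervalIntegral.integral_eq_sub_of_hasDerivAt
        (f := fun τ => vel τ * Real.exp (-A τ)) (f' := fun τ => Real.exp (-A τ) * wt τ)
        (fun x hx => hψd x (by rwa [Set.uIcc_of_le ht₀0] at hx))
        (((Real.continuous_exp.comp hAcont.neg).mul hwtcont).intervalIntegrable 0 t₀)
    have hwtnn : ∀ τ ∈ Set.Icc (0:ℝ) t₀, 0 ≤ Real.exp (-A τ) * wt τ := by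
      intro τ hτ
      apply mul_nonneg (Real.exp_pos _).le
      show 0 ≤ -(U τ i₀ * ∑ j ∈ Finset.univ.erase i₀, M i₀ j * W τ j)
      have hsumle : ∑ j ∈ Finset.univ.erase i₀, M i₀ j * W τ j ≤ 0 := by
        apply Finset.sum_nonpos
        intro j hj
        have hjne : j ≠ i₀ := Finset.ne_of_mem_erase hj
        have h1 : M i₀ j ≤ 0 := hA2 i₀ j (Ne.symm hjne)
        have h2 : 0 ≤ W τ j := hWnn τ hτ j
        exact mul_nonpos_iff.mpr (Or.inr ⟨h1, h2⟩)
      have hUnn : 0 ≤ U τ i₀ := by rw [hUeq τ hτ.1]; exact (hupos i₀ τ hτ.1).le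
      nlinarith
    have hintnn : 0 ≤ ∫ τ in (0:ℝ)..t₀, Real.exp (-A τ) * wt τ :=
      intervalIntegral.integral_nonneg ht₀0 hwtnn
    have hpos0' : 0 < vel 0 * Real.exp (-A 0) := by
      rw [hveleq 0 le_rfl]
      exact mul_pos (hv0pos i₀) (Real.exp_pos _)
    have hneg : vel t₀ * Real.exp (-A t₀) ≤ 0 := by
      rw [hveleq t₀ ht₀0]
      exact mul_nonpos_iff.mpr (Or.inr ⟨hi₀, (Real.exp_pos _).le⟩)
    linarith
  -- monotonicity of the solution
  have hmono : ∀ i, ∀ t ∈ Set.Icc (0:ℝ) T, u t i ≤ u T i := by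
    rintro i t ⟨h0, h1⟩
    have hd : ∀ x ∈ Set.uIcc t T, HasDerivAt (fun τ => u τ i) (W x i) x := by
      intro x hx
      rw [Set.uIcc_of_le h1] at hx
      exact hWode x (le_trans h0 hx.1) i
    have hftc := intervalIntegral.integral_eq_sub_of_hasDerivAt hd
      ((hWcont i).intervalIntegrable t T)
    have hnn : 0 ≤ ∫ τ in t..T, W τ i :=
      intervalIntegral.integral_nonneg h1 (fun x hx => hvnn x (le_trans h0 hx.1) i)
    linarith
  -- integrability
  have hInt : ∀ i, IntervalIntegrable (fun t => u t i) volume 0 T := by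
    intro i
    apply ContinuousOn.intervalIntegrable
    rw [Set.uIcc_of_le hT.le]
    exact (hcont i).mono (fun t ht => ht.1)
  -- average bounds
  have havg : ∀ i, 0 ≤ (∫ t in (0:ℝ)..T, u t i) / T ∧ (∫ t in (0:ℝ)..T, u t i) / T ≤ u T i := by
    intro i
    constructor
    · apply div_nonneg _ hT.le
      exact intervalIntegral.integral_nonneg hT.le (fun x hx => (hupos i x hx.1).le)
    · rw [div_le_iff₀ hT]
      have h1 : ∫ t in (0:ℝ)..T, u t i ≤ ∫ t in (0:ℝ)..T, u T i := by
        apply intervalIntegral.integral_mono_on hT.le (hInt i) intervalIntegrable_const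
        intro x hx
        exact hmono i x hx
      have h2 : ∫ t in (0:ℝ)..T, u T i = T * u T i := by
        rw [intervalIntegral.integral_const, smul_eq_mul]
        ring
      calc (∫ t in (0:ℝ)..T, u t i) ≤ T * u T i := by linarith
        _ = u T i * T := by ring
  -- the key integral identity
  have hident : ∀ i, ((M *ᵥ (fun i' => (∫ t in (0:ℝ)..T, u t i') / T)) i - r i)
      = (Real.log (u 0 i) - Real.log (u T i)) / T := by
    intro i
    set g : ℝ → ℝ := fun t => r i - (M *ᵥ U t) i with hgdef
    have hgcont : Continuous g := continuous_const.sub (hMUcont i)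
    have hlogd : ∀ x ∈ Set.uIcc (0:ℝ) T, HasDerivAt (fun τ => Real.log (u τ i)) (g x) x := by
      intro x hx
      rw [Set.uIcc_of_le hT.le] at hx
      have hne : u x i ≠ 0 := (hupos i x hx.1).ne'
      have hlog := (hWode x hx.1 i).log hne
      have e : W x i / u x i = g x := by
        show (U x i * (r i - (M *ᵥ U x) i)) / u x i = r i - (M *ᵥ U x) i
        rw [hUeq x hx.1]
        field_simp
      rwa [e] at hlog
    have hftc := intervalIntegral.integral_eq_sub_of_hasDerivAt hlogd
      (hgcont.intervalIntegrable 0 T)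
    have hUint : ∀ j, ∫ t in (0:ℝ)..T, U t j = ∫ t in (0:ℝ)..T, u t j := by
      intro j
      apply intervalIntegral.integral_congr
      intro t ht
      rw [Set.uIcc_of_le hT.le] at ht
      exact congrFun (hUeq t ht.1) j
    have hint : ∫ t in (0:ℝ)..T, g t = T * r i - ∑ j, M i j * ∫ t in (0:ℝ)..T, u t j := by
      have e1 : ∫ t in (0:ℝ)..T, g t
          = (∫ t in (0:ℝ)..T, r i) - ∫ t in (0:ℝ)..T, ∑ j, M i j * U t j := by
        have : (fun t => g t) = fun t => r i - ∑ j, M i j * U t j := rfl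
        rw [this]
        apply intervalIntegral.integral_sub intervalIntegrable_const
        exact (continuous_finset_sum _ fun j _ => continuous_const.mul (hUcont j)).intervalIntegrable 0 T
      rw [e1]
      have e2 : ∫ t in (0:ℝ)..T, ∑ j, M i j * U t j
          = ∑ j, M i j * ∫ t in (0:ℝ)..T, u t j := by
        rw [intervalIntegral.integral_finset_sum (f := fun j t => M i j * U t j)
          (fun j _ => (continuous_const.mul (hUcont j)).intervalIntegrable 0 T)]
        refine Finset.sum_congr rfl fun j _ => ?_
        rw [intervalIntegral.integral_const_mul, hUint j]
      rw [e2, intervalIntegral.integral_const, smul_eq_mul]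
      ring
    have key : T * r i - ∑ j, M i j * ∫ t in (0:ℝ)..T, u t j
        = Real.log (u T i) - Real.log (u 0 i) := by
      rw [← hint, hftc]
    have e3 : (M *ᵥ fun i' => (∫ t in (0:ℝ)..T, u t i') / T) i
        = (∑ j, M i j * ∫ t in (0:ℝ)..T, u t j) / T := by
      show ∑ j, M i j * ((∫ t in (0:ℝ)..T, u t j) / T) = _
      rw [Finset.sum_div]
      exact Finset.sum_congr rfl fun j _ => (mul_div_assoc _ _ _).symm
    rw [e3]
    field_simp
    linarith
  exact ⟨fun i => ⟨hupos i T hT.le, hbound T hT.le i⟩, havg, hident⟩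

end

open Filter in
/-- The uniform part, as a standalone statement with all analytic facts provided. -/
theorem dln_wrap (d : ℕ)
    (f : (Fin d → ℝ) → ℝ) (hfc : Continuous f)
    (k : Fin d → ℝ)
    (μ : ℝ → Fin d → ℝ)
    (favg : ℝ → ℝ → (Fin d → ℝ))
    (B Q : ℝ)
    (K : Set ℝ) (hK : IsCompact K) (hKsub : K ⊆ Set.Ioi 0) (hKne : K.Nonempty)
    (s₀ : ℝ) (hs₀K : s₀ ∈ K) (hs₀lb : ∀ s ∈ K, s₀ ≤ s)
    (hμB : ∀ s > (0:ℝ), ∀ i, 0 ≤ μ s i ∧ μ s i ≤ B)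
    (hμmin : ∀ s > (0 : ℝ),
      ∀ θ' : Fin d → ℝ, (∀ i, 0 ≤ θ' i) →
        f (μ s) + (1 / s) * ∑ i, k i * μ s i ≤ f θ' + (1 / s) * ∑ i, k i * θ' i)
    (huniq : ∀ c : ℝ, ∀ a b : Fin d → ℝ, (∀ i, 0 ≤ a i) → (∀ i, 0 ≤ b i) →
      (∀ v : Fin d → ℝ, (∀ i, 0 ≤ v i) →
        f a + c * ∑ i, k i * a i ≤ f v + c * ∑ i, k i * v i) →
      (∀ v : Fin d → ℝ, (∀ i, 0 ≤ v i) →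
        f b + c * ∑ i, k i * b i ≤ f v + c * ∑ i, k i * v i) →
      a = b)
    (hγ0 : Tendsto (fun ε => Q / (s₀ * Real.log (1/ε))) (nhdsWithin 0 (Set.Ioi 0)) (nhds 0))
    (hmain : ∀ᶠ ε in nhdsWithin 0 (Set.Ioi 0), ∀ s ∈ K,
      (∀ i, 0 ≤ favg ε s i ∧ favg ε s i ≤ B) ∧
      (f (favg ε s) + (1/s) * ∑ i, k i * favg ε s i
        ≤ f (μ s) + (1/s) * ∑ i, k i * μ s i + Q / (s₀ * Real.log (1/ε)))) :
    TendstoUniformlyOn favg μ (nhdsWithin 0 (Set.Ioi 0)) K := by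
  have hs₀pos : 0 < s₀ := hKsub hs₀K
  rw [Metric.tendstoUniformlyOn_iff]
  intro η hη
  by_contra hcon
  rw [Filter.not_eventually] at hcon
  have hfreq : ∃ᶠ ε in nhdsWithin 0 (Set.Ioi 0),
      ((∀ s ∈ K,
        (∀ i, 0 ≤ favg ε s i ∧ favg ε s i ≤ B) ∧
        (f (favg ε s) + (1/s) * ∑ i, k i * favg ε s i
          ≤ f (μ s) + (1/s) * ∑ i, k i * μ s i + Q / (s₀ * Real.log (1/ε)))) ∧
        ∃ s ∈ K, η ≤ dist (μ s) (favg ε s)) := by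
    apply (hcon.and_eventually hmain).mono
    rintro ε ⟨h1, h2⟩
    refine ⟨h2, ?_⟩
    push_neg at h1
    obtain ⟨s, hs, hds⟩ := h1
    exact ⟨s, hs, hds⟩
  obtain ⟨es, hestend, hes⟩ := Filter.exists_seq_forall_of_frequently hfreq
  have hesP := fun m => (hes m).1
  choose ss hssK hssdist using fun m => (hes m).2
  have hγ : Tendsto (fun m => Q / (s₀ * Real.log (1/(es m)))) atTop (nhds 0) :=
    hγ0.comp hestend
  obtain ⟨sstar, hsstarK, φ1, hφ1, hstend⟩ := hK.tendsto_subseq hssK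
  have hbox : IsCompact (Set.Icc (fun _ => (0:ℝ)) (fun _ => B) : Set (Fin d → ℝ)) :=
    isCompact_Icc
  have hmem1 : ∀ m, favg (es (φ1 m)) (ss (φ1 m)) ∈
      (Set.Icc (fun _ => (0:ℝ)) (fun _ => B) : Set (Fin d → ℝ)) := by
    intro m
    have h := (hesP (φ1 m) (ss (φ1 m)) (hssK (φ1 m))).1
    exact ⟨fun i => (h i).1, fun i => (h i).2⟩
  obtain ⟨ν, hν, φ2, hφ2, hνtend⟩ := hbox.tendsto_subseq hmem1
  have hmem2 : ∀ m, μ (ss (φ1 (φ2 m))) ∈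
      (Set.Icc (fun _ => (0:ℝ)) (fun _ => B) : Set (Fin d → ℝ)) := by
    intro m
    have h := hμB (ss (φ1 (φ2 m))) (hKsub (hssK (φ1 (φ2 m))))
    exact ⟨fun i => (h i).1, fun i => (h i).2⟩
  obtain ⟨μstar, hμstarmem, φ3, hφ3, hμtend⟩ := hbox.tendsto_subseq hmem2
  set ψ : ℕ → ℕ := fun m => φ1 (φ2 (φ3 m)) with hψdef
  have hψmono : StrictMono ψ := hφ1.comp (hφ2.comp hφ3)
  have hstendψ : Tendsto (fun m => ss (ψ m)) atTop (nhds sstar) :=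
    hstend.comp (hφ2.comp hφ3).tendsto_atTop
  have hνtendψ : Tendsto (fun m => favg (es (ψ m)) (ss (ψ m))) atTop (nhds ν) :=
    hνtend.comp hφ3.tendsto_atTop
  have hμtendψ : Tendsto (fun m => μ (ss (ψ m))) atTop (nhds μstar) := hμtend
  have hγψ : Tendsto (fun m => Q / (s₀ * Real.log (1/(es (ψ m))))) atTop (nhds 0) :=
    hγ.comp hψmono.tendsto_atTop
  have hsstarpos : 0 < sstar := hKsub hsstarK
  have hsinv : Tendsto (fun m => 1/(ss (ψ m))) atTop (nhds (1/sstar)) :=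
    (tendsto_const_nhds.div hstendψ hsstarpos.ne')
  -- continuity of the penalty
  have hkcont : Continuous (fun v : Fin d → ℝ => ∑ i, k i * v i) :=
    continuous_finset_sum _ fun i _ => continuous_const.mul (continuous_apply i)
  -- limits of objective values
  have hρftend : Tendsto (fun m => f (favg (es (ψ m)) (ss (ψ m)))
      + (1/(ss (ψ m))) * ∑ i, k i * favg (es (ψ m)) (ss (ψ m)) i) atTop
      (nhds (f ν + (1/sstar) * ∑ i, k i * ν i)) :=
    ((hfc.tendsto ν).comp hνtendψ).add
      (hsinv.mul ((hkcont.tendsto ν).comp hνtendψ))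
  have hμftend : Tendsto (fun m => f (μ (ss (ψ m)))
      + (1/(ss (ψ m))) * ∑ i, k i * μ (ss (ψ m)) i) atTop
      (nhds (f μstar + (1/sstar) * ∑ i, k i * μstar i)) :=
    ((hfc.tendsto μstar).comp hμtendψ).add
      (hsinv.mul ((hkcont.tendsto μstar).comp hμtendψ))
  -- ν and μstar are nonnegative
  have hνnn : ∀ i, 0 ≤ ν i := fun i => hν.1 i
  have hμstarnn : ∀ i, 0 ≤ μstar i := fun i => hμstarmem.1 i
  -- μstar is a minimizer
  have hμstarmin : ∀ w : Fin d → ℝ, (∀ i, 0 ≤ w i) →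
      f μstar + (1/sstar) * ∑ i, k i * μstar i ≤ f w + (1/sstar) * ∑ i, k i * w i := by
    intro w hw
    refine le_of_tendsto_of_tendsto' hμftend ?_ (fun m => hμmin _ (hKsub (hssK (ψ m))) w hw)
    exact tendsto_const_nhds.add (hsinv.mul tendsto_const_nhds)
  -- ν is a minimizer too
  have hνle : f ν + (1/sstar) * ∑ i, k i * ν i
      ≤ f μstar + (1/sstar) * ∑ i, k i * μstar i := by
    have hev : ∀ m, f (favg (es (ψ m)) (ss (ψ m)))
        + (1/(ss (ψ m))) * ∑ i, k i * favg (es (ψ m)) (ss (ψ m)) i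
        ≤ (f (μ (ss (ψ m))) + (1/(ss (ψ m))) * ∑ i, k i * μ (ss (ψ m)) i)
          + Q / (s₀ * Real.log (1/(es (ψ m)))) :=
      fun m => (hesP (ψ m) (ss (ψ m)) (hssK (ψ m))).2
    have := le_of_tendsto_of_tendsto' hρftend (hμftend.add hγψ) hev
    simpa using this
  have hνmin : ∀ w : Fin d → ℝ, (∀ i, 0 ≤ w i) →
      f ν + (1/sstar) * ∑ i, k i * ν i ≤ f w + (1/sstar) * ∑ i, k i * w i :=
    fun w hw => le_trans hνle (hμstarmin w hw)
  have heq : ν = μstar := huniq (1/sstar) ν μstar hνnn hμstarnn hνmin hμstarmin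
  -- contradiction with the distance lower bound
  have hdistlim : Tendsto (fun m => dist (μ (ss (ψ m))) (favg (es (ψ m)) (ss (ψ m))))
      atTop (nhds (dist μstar ν)) := hμtendψ.dist hνtendψ
  have hηle : η ≤ dist μstar ν :=
    ge_of_tendsto hdistlim (Filter.Eventually.of_forall fun m => hssdist (ψ m))
  rw [heq] at hηle
  rw [dist_self] at hηle
  linarith

/-- Theorem 1, point 3: Under (A1) and (A2), the time average
`(1/(s log(1/ε))) ∫₀^{s log(1/ε)} θ^{(ε)}(t) dt` converges to the regularized
minimizer `μ(s)` as `ε → 0⁺`, uniformly for `s` in compact subsets of `(0,∞)`. -/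
theorem dln_time_average_convergence (n d : ℕ) (hn : 0 < n) (hd : 0 < d)
    (X : Matrix (Fin n) (Fin d) ℝ) (y : Fin n → ℝ)
    (M : Matrix (Fin d) (Fin d) ℝ) (r : Fin d → ℝ)
    (hM : M = Xᵀ * X) (hr : r = Xᵀ *ᵥ y)
    (hA1 : ∀ i, 0 < r i)
    (hA2 : ∀ i j, i ≠ j → M i j ≤ 0)
    (C k : Fin d → ℝ) (hC : ∀ i, 0 < C i) (hk : ∀ i, 0 < k i)
    (f : (Fin d → ℝ) → ℝ)
    (hf : ∀ θ : Fin d → ℝ, f θ =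
      (1 / 2) * ∑ j, (y j) ^ 2 - ∑ i, r i * θ i + (1 / 2) * ∑ i, θ i * (M *ᵥ θ) i)
    (μ : ℝ → Fin d → ℝ)
    (hμ : ∀ s > (0 : ℝ),
      (∀ i, 0 ≤ μ s i) ∧
      ∀ θ' : Fin d → ℝ, (∀ i, 0 ≤ θ' i) →
        f (μ s) + (1 / s) * ∑ i, k i * μ s i ≤ f θ' + (1 / s) * ∑ i, k i * θ' i)
    (θ : ℝ → ℝ → Fin d → ℝ)
    (hθinit : ∀ ε ∈ Set.Ioc (0 : ℝ) 1, ∀ i, θ ε 0 i = C i * ε ^ k i)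
    (hθode : ∀ ε ∈ Set.Ioc (0 : ℝ) 1, ∀ t ≥ (0 : ℝ), ∀ i,
      HasDerivAt (fun τ => θ ε τ i) (θ ε t i * (r i - (M *ᵥ θ ε t) i)) t) :
    (∀ s > (0 : ℝ),
      Filter.Tendsto
        (fun ε => fun i =>
          (1 / (s * Real.log (1 / ε))) *
            ∫ t in (0 : ℝ)..(s * Real.log (1 / ε)), θ ε t i)
        (nhdsWithin 0 (Set.Ioi 0)) (nhds (μ s))) ∧
    (∀ K : Set ℝ, IsCompact K → K ⊆ Set.Ioi 0 →
      TendstoUniformlyOn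
        (fun ε s => fun i =>
          (1 / (s * Real.log (1 / ε))) *
            ∫ t in (0 : ℝ)..(s * Real.log (1 / ε)), θ ε t i)
        μ (nhdsWithin 0 (Set.Ioi 0)) K) := by
  subst hM
  subst hr
  -- continuity of f
  have hfc : Continuous f := by
    have he : f = fun v : Fin d → ℝ => (1 / 2) * ∑ j, (y j) ^ 2 - ∑ i, (Xᵀ *ᵥ y) i * v i
        + (1 / 2) * ∑ i, v i * ((Xᵀ * X) *ᵥ v) i := funext hf
    rw [he]
    have hmv : ∀ i, Continuous (fun v : Fin d → ℝ => ((Xᵀ * X) *ᵥ v) i) := by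
      intro i
      have e : (fun v : Fin d → ℝ => ((Xᵀ * X) *ᵥ v) i)
          = fun v => ∑ j, (Xᵀ * X) i j * v j := rfl
      rw [e]
      exact continuous_finset_sum _ fun j _ => continuous_const.mul (continuous_apply j)
    exact ((continuous_const.sub (continuous_finset_sum _ fun i _ =>
      continuous_const.mul (continuous_apply i))).add
      (continuous_const.mul (continuous_finset_sum _ fun i _ =>
        (continuous_apply i).mul (hmv i))))
  -- constants
  set F₀ : ℝ := (1/2) * ∑ j, (|y j| + ∑ i, |X j i| * C i)^2 with hF₀def
  obtain ⟨B, hB1, hBco⟩ := dln_coercive hd X y hA1 F₀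
  have hy2F : (1/2) * ∑ j, (y j)^2 ≤ F₀ := by
    rw [hF₀def]
    have h : ∀ j ∈ Finset.univ, (y j)^2 ≤ (|y j| + ∑ i, |X j i| * C i)^2 := by
      intro j _
      have h1 : 0 ≤ ∑ i, |X j i| * C i :=
        Finset.sum_nonneg fun i _ => mul_nonneg (abs_nonneg _) (hC i).le
      have h2 : |y j| ≤ |y j| + ∑ i, |X j i| * C i := by linarith
      calc (y j)^2 = |y j|^2 := (sq_abs _).symm
        _ ≤ (|y j| + ∑ i, |X j i| * C i)^2 := by
            apply pow_le_pow_left₀ (abs_nonneg _) h2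
    nlinarith [Finset.sum_le_sum h]
  -- bound on the minimizers
  have hμB : ∀ s > (0:ℝ), ∀ i, 0 ≤ μ s i ∧ μ s i ≤ B := by
    intro s hs i
    obtain ⟨hμnn, hμmin⟩ := hμ s hs
    refine ⟨hμnn i, ?_⟩
    have h0 := hμmin 0 (fun i => le_rfl)
    have hf0 : f 0 = (1/2) * ∑ j, (y j)^2 := by
      rw [hf 0]
      simp
    have hk0 : ∑ i, k i * (0 : Fin d → ℝ) i = 0 := by simp
    have hkμ : 0 ≤ (1/s) * ∑ i, k i * μ s i := by
      apply mul_nonneg (by positivity)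
      exact Finset.sum_nonneg fun i _ => mul_nonneg (hk i).le (hμnn i)
    have hfμ : f (μ s) ≤ F₀ := by
      rw [hf0, hk0] at h0
      linarith
    rw [dln_fsq X y f hf (μ s)] at hfμ
    exact hBco (μ s) hμnn hfμ i
  set Q : ℝ := ∑ i, (C i + B * (|Real.log B| + |Real.log (C i)|)) with hQdef
  have hQ0 : 0 ≤ Q := by
    apply Finset.sum_nonneg
    intro i _
    have := hC i
    have h1 : (0:ℝ) ≤ |Real.log B| + |Real.log (C i)| := by positivity
    nlinarith
  -- good parameters
  have hgood : ∀ᶠ ε in nhdsWithin (0:ℝ) (Set.Ioi 0),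
      (0 < ε ∧ ε < 1) ∧ ∀ i, ∑ j, |(Xᵀ * X) i j| * (C j * ε ^ k j) < (Xᵀ *ᵥ y) i := by
    have h1 : ∀ᶠ ε in nhdsWithin (0:ℝ) (Set.Ioi 0), 0 < ε := by
      filter_upwards [self_mem_nhdsWithin] with ε hε
      exact hε
    have h2 : ∀ᶠ ε in nhdsWithin (0:ℝ) (Set.Ioi 0), ε < 1 :=
      (eventually_lt_nhds one_pos).filter_mono nhdsWithin_le_nhds
    have h3 : ∀ i, ∀ᶠ ε in nhdsWithin (0:ℝ) (Set.Ioi 0),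
        ∑ j, |(Xᵀ * X) i j| * (C j * ε ^ k j) < (Xᵀ *ᵥ y) i := by
      intro i
      have htend : Filter.Tendsto (fun ε : ℝ => ∑ j, |(Xᵀ * X) i j| * (C j * ε ^ k j))
          (nhdsWithin (0:ℝ) (Set.Ioi 0)) (nhds 0) := by
        have hterm : ∀ j, Filter.Tendsto (fun ε : ℝ => ε ^ k j)
            (nhdsWithin (0:ℝ) (Set.Ioi 0)) (nhds 0) := by
          intro j
          have hc : ContinuousAt (fun x : ℝ => x ^ k j) 0 :=
            Real.continuousAt_rpow_const 0 (k j) (Or.inr (hk j).le)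
          have := hc.tendsto
          rw [Real.zero_rpow (hk j).ne'] at this
          exact this.mono_left nhdsWithin_le_nhds
        have := tendsto_finset_sum Finset.univ
          (fun j (_ : j ∈ Finset.univ) => ((hterm j).const_mul (|(Xᵀ * X) i j| * C j)))
        simp only [mul_zero, Finset.sum_const_zero] at this
        convert this using 2 with ε
        refine Finset.sum_congr rfl fun j _ => ?_
        ring
      exact htend.eventually_lt_const (hA1 i)
    filter_upwards [h1, h2, Filter.eventually_all.2 h3] with ε he1 he2 he3
    exact ⟨⟨he1, he2⟩, he3⟩
  -- uniform convergence on compacts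
  have hKpart : ∀ K : Set ℝ, IsCompact K → K ⊆ Set.Ioi 0 →
      TendstoUniformlyOn
        (fun ε s => fun i =>
          (1 / (s * Real.log (1 / ε))) *
            ∫ t in (0 : ℝ)..(s * Real.log (1 / ε)), θ ε t i)
        μ (nhdsWithin 0 (Set.Ioi 0)) K := by
    intro K hK hKsub
    rcases K.eq_empty_or_nonempty with rfl | hKne
    · exact tendstoUniformlyOn_empty
    obtain ⟨s₀, hs₀K, hs₀lb⟩ := hK.exists_isLeast hKne
    have hs₀pos : 0 < s₀ := hKsub hs₀K
    -- vanishing gap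
    have hγ0 : Filter.Tendsto (fun ε => Q / (s₀ * Real.log (1/ε)))
        (nhdsWithin (0:ℝ) (Set.Ioi 0)) (nhds 0) := by
      have hinv : Filter.Tendsto (fun ε : ℝ => 1/ε) (nhdsWithin (0:ℝ) (Set.Ioi 0))
          Filter.atTop := by
        simpa only [one_div] using tendsto_inv_nhdsGT_zero
      have hlog : Filter.Tendsto (fun ε : ℝ => Real.log (1/ε))
          (nhdsWithin (0:ℝ) (Set.Ioi 0)) Filter.atTop := Real.tendsto_log_atTop.comp hinv
      have hmul : Filter.Tendsto (fun ε : ℝ => s₀ * Real.log (1/ε))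
          (nhdsWithin (0:ℝ) (Set.Ioi 0)) Filter.atTop := hlog.const_mul_atTop hs₀pos
      exact Filter.Tendsto.div_atTop tendsto_const_nhds hmul
    -- the main eventual estimate
    have hmain : ∀ᶠ ε in nhdsWithin (0:ℝ) (Set.Ioi 0), ∀ s ∈ K,
        (∀ i, 0 ≤ (fun i => (1 / (s * Real.log (1 / ε))) *
            ∫ t in (0 : ℝ)..(s * Real.log (1 / ε)), θ ε t i) i ∧
          (fun i => (1 / (s * Real.log (1 / ε))) *
            ∫ t in (0 : ℝ)..(s * Real.log (1 / ε)), θ ε t i) i ≤ B) ∧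
        (f (fun i => (1 / (s * Real.log (1 / ε))) *
            ∫ t in (0 : ℝ)..(s * Real.log (1 / ε)), θ ε t i)
          + (1/s) * ∑ i, k i * ((fun i => (1 / (s * Real.log (1 / ε))) *
            ∫ t in (0 : ℝ)..(s * Real.log (1 / ε)), θ ε t i) i)
          ≤ f (μ s) + (1/s) * ∑ i, k i * μ s i + Q / (s₀ * Real.log (1/ε))) := by
      filter_upwards [hgood] with ε hε
      obtain ⟨⟨hε0, hε1⟩, hεsmall⟩ := hε
      intro s hsK
      have hs0 : 0 < s := hKsub hsK
      have hs₀s : s₀ ≤ s := hs₀lb hsK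
      have hLpos : 0 < Real.log (1/ε) := Real.log_pos (one_lt_one_div hε0 hε1)
      set Lε := Real.log (1/ε) with hLdef
      set T := s * Lε with hTdef
      have hT : 0 < T := mul_pos hs0 hLpos
      have hεIoc : ε ∈ Set.Ioc (0:ℝ) 1 := ⟨hε0, hε1.le⟩
      have hode := hθode ε hεIoc
      have hpos0 : ∀ i, 0 < θ ε 0 i := by
        intro i
        rw [hθinit ε hεIoc i]
        exact mul_pos (hC i) (Real.rpow_pos_of_pos hε0 _)
      have hsmall : ∀ i, ∑ j, |(Xᵀ * X) i j| * θ ε 0 j < (Xᵀ *ᵥ y) i := by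
        intro i
        have e : ∀ j, θ ε 0 j = C j * ε ^ k j := hθinit ε hεIoc
        simp only [e]
        exact hεsmall i
      have hF0ε : (1/2) * ∑ j, (y j - (X *ᵥ θ ε 0) j)^2 ≤ F₀ := by
        rw [hF₀def]
        have hinit : ∀ i, 0 < θ ε 0 i ∧ θ ε 0 i ≤ C i := by
          intro i
          rw [hθinit ε hεIoc i]
          constructor
          · exact mul_pos (hC i) (Real.rpow_pos_of_pos hε0 _)
          · have h1 : ε ^ k i ≤ 1 := Real.rpow_le_one hε0.le hε1.le (hk i).le
            nlinarith [hC i, Real.rpow_pos_of_pos hε0 (k i)]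
        have h : ∀ j ∈ Finset.univ, (y j - (X *ᵥ θ ε 0) j)^2
            ≤ (|y j| + ∑ i, |X j i| * C i)^2 := by
          intro j _
          have hXb : |(X *ᵥ θ ε 0) j| ≤ ∑ i, |X j i| * C i := by
            have e : (X *ᵥ θ ε 0) j = ∑ i, X j i * θ ε 0 i := rfl
            rw [e]
            calc |∑ i, X j i * θ ε 0 i| ≤ ∑ i, |X j i * θ ε 0 i| :=
                  Finset.abs_sum_le_sum_abs _ _
              _ ≤ ∑ i, |X j i| * C i := by
                  apply Finset.sum_le_sum
                  intro i _
                  rw [abs_mul]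
                  apply mul_le_mul_of_nonneg_left _ (abs_nonneg _)
                  rw [abs_of_pos (hinit i).1]
                  exact (hinit i).2
          have habs : |y j - (X *ᵥ θ ε 0) j| ≤ |y j| + ∑ i, |X j i| * C i := by
            calc |y j - (X *ᵥ θ ε 0) j| = |y j + -((X *ᵥ θ ε 0) j)| := by
                  rw [sub_eq_add_neg]
              _ ≤ |y j| + |-((X *ᵥ θ ε 0) j)| := abs_add_le _ _
              _ = |y j| + |(X *ᵥ θ ε 0) j| := by rw [abs_neg]
              _ ≤ |y j| + ∑ i, |X j i| * C i := by linarith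
          calc (y j - (X *ᵥ θ ε 0) j)^2 = |y j - (X *ᵥ θ ε 0) j|^2 := (sq_abs _).symm
            _ ≤ (|y j| + ∑ i, |X j i| * C i)^2 :=
                pow_le_pow_left₀ (abs_nonneg _) habs 2
        have := Finset.sum_le_sum h
        linarith
      obtain ⟨hTB, hAVG, hID⟩ :=
        dln_core X y hA2 (θ ε) hode hpos0 hsmall B F₀ hBco hF0ε T hT
      set ρ : Fin d → ℝ := fun i' => (∫ t in (0:ℝ)..T, θ ε t i') / T with hρdef
      have hρeq : ∀ i, (∫ t in (0:ℝ)..T, θ ε t i) / T = ρ i := fun i => rfl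
      have hfeq : (fun i => 1 / T * ∫ t in (0:ℝ)..T, θ ε t i) = ρ :=
        funext fun i => one_div_mul_eq_div T _
      have hone : ∀ x : ℝ, 1 / T * x = x / T := fun x => one_div_mul_eq_div T x
      rw [hfeq]
      simp only [hone, hρeq]
      simp only [hρeq] at hAVG
      obtain ⟨hμnn, hμmin⟩ := hμ s hs0
      constructor
      · exact fun i => ⟨(hAVG i).1, le_trans (hAVG i).2 (hTB i).2⟩
      have hexp := dln_expand X y f hf k (1/s) (μ s) ρ
      have hlogε : Real.log ε = -Lε := by
        rw [hLdef, one_div, Real.log_inv, neg_neg]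
      have hgid : ∀ i, ((Xᵀ * X) *ᵥ ρ) i - (Xᵀ *ᵥ y) i + (1/s) * k i
          = (Real.log (C i) - Real.log (θ ε T i)) / T := by
        intro i
        have h1 := hID i
        have h2 : Real.log (θ ε 0 i) = Real.log (C i) + k i * Real.log ε := by
          rw [hθinit ε hεIoc i, Real.log_mul (hC i).ne' (Real.rpow_pos_of_pos hε0 _).ne',
            Real.log_rpow hε0]
        rw [h2, hlogε] at h1
        rw [h1, hTdef]
        field_simp
        ring
      have hBpos : (0:ℝ) < B := lt_of_lt_of_le one_pos hB1
      have hterm : ∀ i ∈ Finset.univ,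
          (((Xᵀ * X) *ᵥ ρ) i - (Xᵀ *ᵥ y) i + (1/s) * k i) * (ρ i - μ s i)
          ≤ (C i + B * (|Real.log B| + |Real.log (C i)|)) / T := by
        intro i _
        rw [hgid i, div_mul_eq_mul_div]
        rw [div_le_div_iff_of_pos_right hT]
        set av := θ ε T i with hadef
        have ha0 : 0 < av := (hTB i).1
        have haB : av ≤ B := (hTB i).2
        have hρ0 : 0 ≤ ρ i := (hAVG i).1
        have hρa : ρ i ≤ av := (hAVG i).2
        have hμ0 : 0 ≤ μ s i := hμnn i
        have hμB' : μ s i ≤ B := (hμB s hs0 i).2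
        rcases le_total (Real.log (C i)) (Real.log av) with hca | hca
        · have h1 : 0 ≤ Real.log av - Real.log (C i) := by linarith
          have h2 : Real.log av - Real.log (C i) ≤ |Real.log B| + |Real.log (C i)| := by
            have hla : Real.log av ≤ Real.log B := Real.log_le_log ha0 haB
            have hb1 := le_abs_self (Real.log B)
            have hb2 := neg_abs_le (Real.log (C i))
            linarith
          have key : (Real.log (C i) - Real.log av) * (ρ i - μ s i)
              = (Real.log av - Real.log (C i)) * (μ s i - ρ i) := by ring
          rw [key]
          have habs0 : (0:ℝ) ≤ |Real.log B| + |Real.log (C i)| := by positivity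
          have hBS : (0:ℝ) ≤ B * (|Real.log B| + |Real.log (C i)|) :=
            mul_nonneg hBpos.le habs0
          rcases le_total (μ s i - ρ i) 0 with hmr | hmr
          · have hle : (Real.log av - Real.log (C i)) * (μ s i - ρ i) ≤ 0 :=
              mul_nonpos_iff.mpr (Or.inl ⟨h1, hmr⟩)
            linarith [hC i]
          · have hb : μ s i - ρ i ≤ B := by linarith
            have hmm := mul_le_mul h2 hb hmr habs0
            have hcomm : (|Real.log B| + |Real.log (C i)|) * B
                = B * (|Real.log B| + |Real.log (C i)|) := mul_comm _ _
            linarith [hC i]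
        · have h1 : 0 ≤ Real.log (C i) - Real.log av := by linarith
          have hlog1 : (Real.log (C i) - Real.log av) * av ≤ C i - av := by
            have e : Real.log (C i) - Real.log av = Real.log (C i / av) :=
              (Real.log_div (hC i).ne' ha0.ne').symm
            rw [e]
            have h2 : Real.log (C i / av) ≤ C i / av - 1 :=
              Real.log_le_sub_one_of_pos (div_pos (hC i) ha0)
            calc Real.log (C i / av) * av ≤ (C i / av - 1) * av :=
                  mul_le_mul_of_nonneg_right h2 ha0.le
              _ = C i - av := by field_simp
          have step1 : (Real.log (C i) - Real.log av) * (ρ i - μ s i)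
              ≤ (Real.log (C i) - Real.log av) * ρ i :=
            mul_le_mul_of_nonneg_left (by linarith) h1
          have step2 : (Real.log (C i) - Real.log av) * ρ i
              ≤ (Real.log (C i) - Real.log av) * av :=
            mul_le_mul_of_nonneg_left hρa h1
          have hnn : (0:ℝ) ≤ B * (|Real.log B| + |Real.log (C i)|) := by positivity
          linarith [step1, step2, hlog1, ha0, hC i]
      have hsum : ∑ i, ((((Xᵀ * X) *ᵥ ρ) i - (Xᵀ *ᵥ y) i + (1/s) * k i) * (ρ i - μ s i))
          ≤ Q / T := by
        calc ∑ i, ((((Xᵀ * X) *ᵥ ρ) i - (Xᵀ *ᵥ y) i + (1/s) * k i) * (ρ i - μ s i))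
            ≤ ∑ i, (C i + B * (|Real.log B| + |Real.log (C i)|)) / T :=
              Finset.sum_le_sum hterm
          _ = Q / T := by rw [hQdef, Finset.sum_div]
      have hquad : 0 ≤ (1/2) * ∑ j, ((X *ᵥ μ s) j - (X *ᵥ ρ) j)^2 := by positivity
      have hsum' : ∑ i, ((((Xᵀ * X) *ᵥ ρ) i - (Xᵀ *ᵥ y) i + (1/s) * k i) * (μ s i - ρ i))
          = -∑ i, ((((Xᵀ * X) *ᵥ ρ) i - (Xᵀ *ᵥ y) i + (1/s) * k i) * (ρ i - μ s i)) := by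
        rw [← Finset.sum_neg_distrib]
        exact Finset.sum_congr rfl fun i _ => by ring
      have hQT : Q / T ≤ Q / (s₀ * Lε) := by
        apply div_le_div_of_nonneg_left hQ0 (mul_pos hs₀pos hLpos)
        rw [hTdef]
        exact mul_le_mul_of_nonneg_right hs₀s hLpos.le
      linarith [hexp, hsum, hsum', hquad, hQT]
    exact dln_wrap d f hfc k μ _ B Q K hK hKsub hKne s₀ hs₀K hs₀lb hμB
      (fun s hs => (hμ s hs).2) (fun c a b ha hb hma hmb =>
        dln_unique X y hA1 hA2 f hf k c a b ha hb hma hmb) hγ0 hmain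
  refine ⟨?_, hKpart⟩
  intro s hs
  have h1 := hKpart {s} isCompact_singleton (Set.singleton_subset_iff.mpr hs)
  rw [Metric.tendstoUniformlyOn_iff] at h1
  rw [Metric.tendsto_nhds]
  intro η hη
  filter_upwards [h1 η hη] with ε hε
  have h2 := hε s (Set.mem_singleton s)
  rw [dist_comm] at h2
  exact h2
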